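/- arXiv:1603.05873 — 2 statements merged into one kernel-verified Lean document; each statement's English description precedes it below -/
import Mathlib

section
/- Free groups are residually nilpotent: the intersection over all q of the q-th terms of the lower central series of a free group is the trivial subgroup. -/
namespace MagnusAux

variable {α : Type*}

/-- Noncommutative power series over ℤ in indeterminates α, as coefficient functions. -/
def Mag (α : Type*) : Type _ := List α → ℤ

instance : AddCommGroup (Mag α) := by unfold Mag; infer_instance

def oneFun : List α → ℤ
  | [] => 1
  | _ :: _ => 0

@[simp] lemma oneFun_nil : oneFun ([] : List α) = 1 := rfl
@[simp] lemma oneFun_cons (a : α) (w : List α) : oneFun (a :: w) = 0 := rfl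

/-- Convolution. -/
def conv : List α → (List α → ℤ) → (List α → ℤ) → ℤ
  | [], f, g => f [] * g []
  | a :: w, f, g => f [] * g (a :: w) + conv w (fun u => f (a :: u)) g

lemma conv_add_left (w : List α) (f f' g : List α → ℤ) :
    conv w (fun u => f u + f' u) g = conv w f g + conv w f' g := by
  induction w generalizing f f' with
  | nil => simp [conv]; ring
  | cons a w ih => simp only [conv, ih]; ring

lemma conv_add_right (w : List α) (f g g' : List α → ℤ) :
    conv w f (fun u => g u + g' u) = conv w f g + conv w f g' := by
  induction w generalizing f with
  | nil => simp [conv]; ring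
  | cons a w ih => simp only [conv, ih]; ring

lemma conv_congr_left (w : List α) {f f' : List α → ℤ} (g : List α → ℤ)
    (hc : ∀ u, f u = f' u) : conv w f g = conv w f' g := by
  have : f = f' := funext hc
  subst this; rfl

lemma conv_smul_left (w : List α) (c : ℤ) (f g : List α → ℤ) :
    conv w (fun u => c * f u) g = c * conv w f g := by
  induction w generalizing f with
  | nil => simp [conv]; ring
  | cons a w ih => simp only [conv, ih]; ring

lemma conv_zero_left (w : List α) (g : List α → ℤ) :
    conv w (fun _ => 0) g = 0 := by
  induction w with
  | nil => simp [conv]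
  | cons a w ih => simp [conv, ih]

instance : One (Mag α) := ⟨oneFun⟩

lemma one_apply (w : List α) : (1 : Mag α) w = oneFun w := rfl

instance : Mul (Mag α) := ⟨fun f g w => conv w f g⟩

lemma mul_apply (f g : Mag α) (w : List α) : (f * g) w = conv w f g := rfl

lemma conv_one_left (w : List α) (g : List α → ℤ) :
    conv w oneFun g = g w := by
  induction w with
  | nil => simp [conv]
  | cons a w ih =>
    simp only [conv, oneFun_nil, one_mul]
    rw [conv_congr_left w (f' := fun _ => 0) g (by intro u; simp)]
    simp [conv_zero_left]

lemma conv_one_right (w : List α) (f : List α → ℤ) :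
    conv w f oneFun = f w := by
  induction w generalizing f with
  | nil => simp [conv]
  | cons a w ih => simp only [conv, ih]; simp

instance : Ring (Mag α) where
  __ := (inferInstance : AddCommGroup (Mag α))
  mul := (· * ·)
  one := 1
  one_mul f := funext fun w => conv_one_left w f
  mul_one f := funext fun w => conv_one_right w f
  left_distrib f g k := by
    funext w
    show conv w f (fun u => g u + k u) = conv w f g + conv w f k
    exact conv_add_right w f g k
  right_distrib f g k := by
    funext w
    show conv w (fun u => f u + g u) k = conv w f k + conv w g k
    exact conv_add_left w f g k
  zero_mul f := by
    funext w
    exact conv_zero_left w f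
  mul_zero f := by
    funext w
    show conv w f (fun _ => 0) = 0
    induction w generalizing f with
    | nil => simp [conv]
    | cons a w ih => simp [conv]; exact ih _
  mul_assoc f g k := by
    funext w
    show conv w (fun u => conv u f g) k = conv w f (fun u => conv u g k)
    induction w generalizing f with
    | nil => simp [conv]; ring
    | cons a w ih =>
      simp only [conv]
      rw [conv_congr_left w (f' := fun u =>
        (fun u => f [] * g (a :: u)) u + (fun u => conv u (fun v => f (a :: v)) g) u) k
        (fun u => rfl)]
      erw [conv_add_left]
      erw [conv_smul_left w (f []) (fun u => g (a :: u)) k, ih]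
      ring

/-- support lemma for products -/
lemma exists_split_of_conv_ne_zero {w : List α} {f g : List α → ℤ}
    (h : conv w f g ≠ 0) : ∃ u v, w = u ++ v ∧ f u ≠ 0 ∧ g v ≠ 0 := by
  induction w generalizing f with
  | nil =>
    refine ⟨[], [], rfl, ?_, ?_⟩ <;>
    · intro h0
      apply h
      simp [conv, h0]
  | cons a w ih =>
    simp only [conv] at h
    by_cases h1 : f [] * g (a :: w) ≠ 0
    · exact ⟨[], a :: w, rfl, fun h0 => h1 (by simp [h0]), fun h0 => h1 (by simp [h0])⟩
    · push_neg at h1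
      have h2 : conv w (fun u => f (a :: u)) g ≠ 0 := by
        intro h0; apply h; rw [h0, h1]; ring
      obtain ⟨u, v, huv, hf, hg⟩ := ih h2
      exact ⟨a :: u, v, by simp [huv], hf, hg⟩

/-! ### Generators and their units -/

open Classical in
/-- the generator `x_y` -/
noncomputable def gen (y : α) : Mag α := fun w => if w = [y] then 1 else 0

@[simp] lemma gen_nil (y : α) : gen y ([] : List α) = 0 := by simp [gen]

@[simp] lemma gen_self (y : α) : gen y [y] = 1 := by simp [gen]

lemma gen_cons_self (y : α) (u : List α) : gen y (y :: u) = oneFun u := by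
  cases u with
  | nil => simp
  | cons b t => simp [gen]

lemma gen_cons_ne (y a : α) (u : List α) (hne : a ≠ y) : gen y (a :: u) = 0 := by
  have : ¬(a :: u = [y]) := by simp [hne]
  simp [gen, this]

open Classical in
/-- the geometric series `1 - x_y + x_y^2 - ⋯`, inverse of `1 + x_y`. -/
noncomputable def geo (y : α) : Mag α :=
  fun w => if w = List.replicate w.length y then (-1) ^ w.length else 0

@[simp] lemma geo_nil (y : α) : geo y ([] : List α) = 1 := by simp [geo]

lemma geo_cons_self (y : α) (w : List α) : geo y (y :: w) = - geo y w := by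
  simp only [geo, List.length_cons, List.replicate_succ]
  by_cases h : w = List.replicate w.length y
  · simp [← h, pow_succ]
  · have : ¬(y :: w = y :: List.replicate w.length y) := by simp [h]
    simp [h, this]

lemma geo_cons_ne (y a : α) (w : List α) (hne : a ≠ y) : geo y (a :: w) = 0 := by
  simp only [geo, List.length_cons, List.replicate_succ]
  have : ¬(a :: w = y :: List.replicate w.length y) := by simp [hne]
  simp [this]

lemma onePlusGen_mul_geo (y : α) : (1 + gen y) * geo y = 1 := by
  funext w
  show conv w (fun u => oneFun u + gen y u) (geo y) = oneFun w
  induction w with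
  | nil => simp [conv]
  | cons a w ih =>
    simp only [conv, oneFun_nil, gen_nil, add_zero, one_mul, oneFun_cons]
    by_cases ha : a = y
    · subst ha
      rw [conv_congr_left w (f' := oneFun) (geo a)
        (fun u => by rw [zero_add, gen_cons_self])]
      erw [conv_one_left, geo_cons_self]
      ring
    · rw [conv_congr_left w (f' := fun _ => 0) (geo y)
        (fun u => by rw [zero_add, gen_cons_ne y a u ha])]
      erw [conv_zero_left, geo_cons_ne y a w ha]
      ring

lemma geo_mul_onePlusGen (y : α) : geo y * (1 + gen y) = 1 := by
  funext w
  show conv w (geo y) (fun u => oneFun u + gen y u) = oneFun w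
  induction w with
  | nil => simp [conv]
  | cons a w ih =>
    simp only [conv, geo_nil, one_mul, oneFun_cons]
    by_cases ha : a = y
    · subst ha
      rw [conv_congr_left w (f' := fun u => (-1) * geo a u) _
        (fun u => by rw [geo_cons_self]; ring)]
      erw [conv_smul_left, ih]
      rw [zero_add, gen_cons_self]
      cases w <;> simp
    · rw [conv_congr_left w (f' := fun _ => 0) _
        (fun u => geo_cons_ne y a u ha)]
      rw [conv_zero_left, zero_add, gen_cons_ne y a w ha]
      ring

/-- The Magnus unit `1 + x_y`. -/
noncomputable def U (y : α) : (Mag α)ˣ :=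
  ⟨1 + gen y, geo y, onePlusGen_mul_geo y, geo_mul_onePlusGen y⟩

@[simp] lemma U_val (y : α) : ((U y : (Mag α)ˣ) : Mag α) = 1 + gen y := rfl
@[simp] lemma U_inv (y : α) : ((((U y)⁻¹ : (Mag α)ˣ)) : Mag α) = geo y := rfl

/-! ### The filtration by total degree -/

/-- `P q f` : all coefficients of `f` in degrees `< q` vanish. -/
def P (q : ℕ) (f : Mag α) : Prop := ∀ w : List α, w.length < q → f w = 0

lemma P_zero (f : Mag α) : P 0 f := fun w hw => absurd hw (Nat.not_lt_zero _)

lemma P_mono {a b : ℕ} (h : a ≤ b) {f : Mag α} (hf : P b f) : P a f :=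
  fun w hw => hf w (lt_of_lt_of_le hw h)

lemma P_add {q : ℕ} {f g : Mag α} (hf : P q f) (hg : P q g) : P (q) (f + g) := by
  intro w hw
  show f w + g w = 0
  rw [hf w hw, hg w hw]; ring

lemma P_neg {q : ℕ} {f : Mag α} (hf : P q f) : P q (-f) := by
  intro w hw
  show -(f w) = 0
  rw [hf w hw]; ring

lemma P_sub {q : ℕ} {f g : Mag α} (hf : P q f) (hg : P q g) : P q (f - g) := by
  intro w hw
  show f w - g w = 0
  rw [hf w hw, hg w hw]; ring

lemma P_mul {a b : ℕ} {f g : Mag α} (hf : P a f) (hg : P b g) : P (a + b) (f * g) := by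
  intro w hw
  by_contra h
  obtain ⟨u, v, huv, hfu, hgv⟩ := exists_split_of_conv_ne_zero h
  have hu : a ≤ u.length := by
    by_contra hu'
    exact hfu (hf u (Nat.lt_of_not_le hu'))
  have hv : b ≤ v.length := by
    by_contra hv'
    exact hgv (hg v (Nat.lt_of_not_le hv'))
  have : a + b ≤ w.length := by
    rw [huv, List.length_append]
    omega
  omega

/-- The congruence subgroups `1 + I^q` of the unit group. -/
noncomputable def H (q : ℕ) : Subgroup (Mag α)ˣ where
  carrier := {v | P q ((v : Mag α) - 1)}
  one_mem' := by
    show P q ((1 : (Mag α)ˣ) - 1 : Mag α)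
    rw [Units.val_one, sub_self]
    intro w _; rfl
  mul_mem' := by
    intro u v hu hv
    simp only [Set.mem_setOf_eq, Units.val_mul] at *
    have key : (u : Mag α) * v - 1
        = ((u : Mag α) - 1) * ((v : Mag α) - 1) + (((u : Mag α) - 1) + ((v : Mag α) - 1)) := by
      noncomm_ring
    rw [key]
    exact P_add (P_mono (Nat.le_add_right q q) (P_mul hu hv)) (P_add hu hv)
  inv_mem' := by
    intro u hu
    simp only [Set.mem_setOf_eq] at *
    have key : ((u⁻¹ : (Mag α)ˣ) : Mag α) - 1
        = -(((u⁻¹ : (Mag α)ˣ) : Mag α) * ((u : Mag α) - 1)) := by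
      have h1 : ((u⁻¹ : (Mag α)ˣ) : Mag α) * (u : Mag α) = 1 := u.inv_mul
      rw [mul_sub, h1]
      noncomm_ring
    rw [key]
    exact P_neg (by simpa using P_mul (P_zero ((u⁻¹ : (Mag α)ˣ) : Mag α)) hu)

lemma mem_H_iff {q : ℕ} {v : (Mag α)ˣ} : v ∈ H q ↔ P q ((v : Mag α) - 1) := Iff.rfl

open scoped commutatorElement in
lemma commutator_mem_H {a b : ℕ} {u v : (Mag α)ˣ} (hu : u ∈ H a) (hv : v ∈ H b) :
    ⁅u, v⁆ ∈ H (a + b) := by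
  rw [mem_H_iff] at *
  rw [commutatorElement_def]
  have hval : ((u * v * u⁻¹ * v⁻¹ : (Mag α)ˣ) : Mag α)
      = (u : Mag α) * v * ((u⁻¹ : (Mag α)ˣ) : Mag α) * ((v⁻¹ : (Mag α)ˣ) : Mag α) := by
    simp [Units.val_mul]
  rw [hval]
  set s : Mag α := (u : Mag α) - 1 with hs
  set t : Mag α := (v : Mag α) - 1 with ht
  have key : (u : Mag α) * v * ((u⁻¹ : (Mag α)ˣ) : Mag α) * ((v⁻¹ : (Mag α)ˣ) : Mag α) - 1
      = (s * t - t * s) * (((u⁻¹ : (Mag α)ˣ) : Mag α) * ((v⁻¹ : (Mag α)ˣ) : Mag α)) := by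
    have h1 : s * t - t * s = (u : Mag α) * v - (v : Mag α) * u := by
      rw [hs, ht]; noncomm_ring
    rw [h1, sub_mul]
    have h2 : (v : Mag α) * u * (((u⁻¹ : (Mag α)ˣ) : Mag α) * ((v⁻¹ : (Mag α)ˣ) : Mag α)) = 1 := by
      calc (v : Mag α) * u * (((u⁻¹ : (Mag α)ˣ) : Mag α) * ((v⁻¹ : (Mag α)ˣ) : Mag α))
          = (v : Mag α) * ((u : Mag α) * ((u⁻¹ : (Mag α)ˣ) : Mag α)) * ((v⁻¹ : (Mag α)ˣ) : Mag α) := by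
            noncomm_ring
        _ = 1 := by rw [u.mul_inv]; rw [mul_one, v.mul_inv]
    rw [h2]
    noncomm_ring
  rw [key]
  have hst : P (a + b) (s * t - t * s) :=
    P_sub (P_mul hu hv) (by rw [Nat.add_comm a b] at *; exact P_mul hv hu)
  simpa using P_mul hst (P_zero _)

/-! ### The Magnus homomorphism -/

/-- The Magnus homomorphism sending a generator `y` to `1 + x_y`. -/
noncomputable def magnus : FreeGroup α →* (Mag α)ˣ := FreeGroup.lift (fun y => U y)

@[simp] lemma magnus_of (y : α) : magnus (FreeGroup.of y) = U y := FreeGroup.lift_apply_of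

lemma magnus_mem_H_one (x : FreeGroup α) : magnus x ∈ H 1 := by
  induction x using FreeGroup.induction_on with
  | C1 => simp only [map_one]; exact one_mem _
  | of y =>
    show magnus (FreeGroup.of y) ∈ H 1
    rw [magnus_of, mem_H_iff]
    intro w hw
    interval_cases h : w.length
    · rw [List.length_eq_zero_iff] at h
      subst h
      show (1 + gen y) [] - (1 : Mag α) [] = 0
      show (1 : Mag α) [] + gen y [] - (1 : Mag α) [] = 0
      simp
  | inv_of y hy =>
    rw [map_inv]
    exact inv_mem hy
  | mul x y hx hy =>
    rw [map_mul]
    exact mul_mem hx hy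

open scoped commutatorElement in
lemma lcs_le_comap (q : ℕ) :
    (⊤ : Subgroup (FreeGroup α)).lowerCentralSeries q ≤ (H (q + 1)).comap (magnus (α := α)) := by
  induction q with
  | zero =>
    intro x _
    exact magnus_mem_H_one x
  | succ q ih =>
    rw [Subgroup.lowerCentralSeries_succ, Subgroup.commutator_def, Subgroup.closure_le]
    rintro x ⟨p, hp, g, -, rfl⟩
    rw [SetLike.mem_coe, Subgroup.mem_comap, map_commutatorElement]
    exact commutator_mem_H (ih hp) (magnus_mem_H_one g)

/-! ### Coefficient computations -/

lemma val_nil_eq_one (y : α) (n : ℤ) : (((U y ^ n : (Mag α)ˣ) : Mag α)) [] = 1 := by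
  let ε : Mag α →+* ℤ :=
    { toFun := fun f => f []
      map_one' := by show oneFun [] = 1; rfl
      map_mul' := fun f g => rfl
      map_zero' := rfl
      map_add' := fun f g => rfl }
  have hU : Units.map (ε.toMonoidHom) (U y) = 1 := by
    apply Units.ext
    show ε ((U y : Mag α)) = 1
    show (1 : Mag α) [] + gen y [] = 1
    rw [one_apply, gen_nil, oneFun_nil, add_zero]
  have hn : Units.map (ε.toMonoidHom) (U y ^ n) = 1 := by
    rw [map_zpow, hU, one_zpow]
  have h2 := congrArg (Units.val) hn
  rw [Units.coe_map] at h2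
  exact h2

lemma conv_single (y : α) (f g : List α → ℤ) :
    conv [y] f g = f [] * g [y] + f [y] * g [] := by
  simp [conv]

lemma val_single_eq (y : α) (n : ℤ) : (((U y ^ n : (Mag α)ˣ) : Mag α)) [y] = n := by
  induction n using Int.induction_on with
  | zero => show oneFun [y] = 0; rfl
  | succ n ih =>
    rw [zpow_add_one]
    show conv [y] _ _ = _
    erw [conv_single]
    erw [val_nil_eq_one, ih]
    show _ * ((1 : Mag α) [y] + gen y [y]) + _ * ((1 : Mag α) [] + gen y []) = _
    simp [one_apply]
    ring
  | pred n ih =>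
    rw [zpow_sub_one]
    show conv [y] _ _ = _
    erw [conv_single]
    erw [val_nil_eq_one, ih]
    show _ * geo y [y] + _ * geo y [] = _
    rw [show geo y [y] = - geo y [] from geo_cons_self y [], geo_nil]
    ring

lemma Uval_supp (y : α) {w : List α} (h : ((U y : (Mag α)ˣ) : Mag α) w ≠ 0) :
    ∃ k, w = List.replicate k y := by
  have h' : (1 : Mag α) w + gen y w ≠ 0 := h
  cases w with
  | nil => exact ⟨0, rfl⟩
  | cons a u =>
    rw [one_apply, oneFun_cons, zero_add] at h'
    by_cases ha : a = y
    · subst ha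
      rw [gen_cons_self] at h'
      cases u with
      | nil => exact ⟨1, rfl⟩
      | cons b t => simp at h'
    · rw [gen_cons_ne y a u ha] at h'
      exact absurd rfl h'

lemma Uinv_supp (y : α) {w : List α} (h : (((U y)⁻¹ : (Mag α)ˣ) : Mag α) w ≠ 0) :
    ∃ k, w = List.replicate k y := by
  rw [U_inv] at h
  refine ⟨w.length, ?_⟩
  by_contra hw
  exact h (by simp [geo, hw])

lemma mul_supp {y : α} {f g : Mag α}
    (hf : ∀ w, f w ≠ 0 → ∃ k, w = List.replicate k y)
    (hg : ∀ w, g w ≠ 0 → ∃ k, w = List.replicate k y) :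
    ∀ w, (f * g) w ≠ 0 → ∃ k, w = List.replicate k y := by
  intro w h
  obtain ⟨u, v, huv, hu, hv⟩ := exists_split_of_conv_ne_zero h
  obtain ⟨k₁, hk₁⟩ := hf u hu
  obtain ⟨k₂, hk₂⟩ := hg v hv
  exact ⟨k₁ + k₂, by rw [huv, hk₁, hk₂, List.replicate_add]⟩

lemma Uzpow_supp (y : α) (n : ℤ) :
    ∀ w, ((U y ^ n : (Mag α)ˣ) : Mag α) w ≠ 0 → ∃ k, w = List.replicate k y := by
  have hpow : ∀ (m : ℕ) (u : (Mag α)ˣ),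
      (∀ w, (u : Mag α) w ≠ 0 → ∃ k, w = List.replicate k y) →
      ∀ w, ((u ^ m : (Mag α)ˣ) : Mag α) w ≠ 0 → ∃ k, w = List.replicate k y := by
    intro m u hu
    induction m with
    | zero =>
      intro w h
      rw [pow_zero] at h
      have : oneFun w ≠ 0 := h
      cases w with
      | nil => exact ⟨0, rfl⟩
      | cons a t => simp at this
    | succ m ih =>
      intro w h
      rw [pow_succ, Units.val_mul] at h
      exact mul_supp ih hu w h
  cases n with
  | ofNat m =>
    rw [Int.ofNat_eq_coe, zpow_natCast]
    exact hpow m (U y) (fun w h => Uval_supp y h)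
  | negSucc m =>
    rw [zpow_negSucc]
    intro w h
    rw [← inv_pow] at h
    exact hpow (m + 1) (U y)⁻¹ (fun w h => Uinv_supp y h) w h

/-! ### fits -/

def fits : List (α × ℤ) → List α → Prop
  | [], w => w = []
  | p :: B, w => ∃ k w', w = List.replicate k p.1 ++ w' ∧ fits B w'

/-- the product of the Magnus units over a block decomposition -/
noncomputable def V (B : List (α × ℤ)) : (Mag α)ˣ :=
  (B.map (fun p => U p.1 ^ p.2)).prod

@[simp] lemma V_nil : V ([] : List (α × ℤ)) = 1 := rfl

lemma V_cons (p : α × ℤ) (B : List (α × ℤ)) : V (p :: B) = U p.1 ^ p.2 * V B := by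
  simp [V]

lemma fits_of_ne_zero : ∀ (B : List (α × ℤ)) (w : List α),
    ((V B : (Mag α)ˣ) : Mag α) w ≠ 0 → fits B w := by
  intro B
  induction B with
  | nil =>
    intro w h
    have : oneFun w ≠ 0 := h
    cases w with
    | nil => rfl
    | cons a t => simp at this
  | cons p B ih =>
    intro w h
    rw [V_cons, Units.val_mul] at h
    obtain ⟨u, v, huv, hu, hv⟩ := exists_split_of_conv_ne_zero h
    obtain ⟨k, hk⟩ := Uzpow_supp p.1 p.2 u hu
    exact ⟨k, v, by rw [huv, hk], ih v hv⟩

lemma no_fit : ∀ (B : List (α × ℤ)) (m : List α), fits B m → m.Chain' (· ≠ ·) →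
    B.length < m.length → False := by
  intro B
  induction B with
  | nil =>
    intro m hf _ hl
    rw [show m = [] from hf] at hl
    simp at hl
  | cons p B ih =>
    intro m hf hc hl
    obtain ⟨k, w', hw, hf'⟩ := hf
    match k with
    | 0 =>
      simp only [List.replicate, List.nil_append] at hw
      rw [hw] at hc hl
      exact ih w' hf' hc (by simp at hl; omega)
    | 1 =>
      simp only [List.replicate, List.nil_append] at hw
      rw [hw] at hc hl
      exact ih w' hf' hc.tail (by simp at hl; omega)
    | (k + 2) =>
      rw [List.replicate_succ, List.replicate_succ, List.cons_append, List.cons_append] at hw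
      rw [hw] at hc
      exact (List.isChain_cons_cons.mp hc).1 rfl

/-! ### auxiliary convolution vanishing lemmas -/

lemma conv_eq_zero_of_take (w : List α) (f g : List α → ℤ)
    (h : ∀ i, i ≤ w.length → f (w.take i) = 0) : conv w f g = 0 := by
  induction w generalizing f with
  | nil =>
    have := h 0 (by simp)
    simp only [List.take_nil] at this
    simp [conv, this]
  | cons a w ih =>
    have h0 := h 0 (by simp)
    simp only [List.take_zero] at h0
    simp only [conv, h0, zero_mul, zero_add]
    apply ih
    intro i hi
    have := h (i + 1) (by simpa using Nat.succ_le_succ hi)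
    simpa [List.take_succ_cons] using this

lemma conv_eq_head_mul (w : List α) (f g : List α → ℤ)
    (h : ∀ i, 1 ≤ i → i ≤ w.length → f (w.take i) = 0) : conv w f g = f [] * g w := by
  cases w with
  | nil => rfl
  | cons a w =>
    show f [] * g (a :: w) + conv w (fun u => f (a :: u)) g = f [] * g (a :: w)
    rw [conv_eq_zero_of_take w _ g ?h0, add_zero]
    intro i hi
    have := h (i + 1) (by omega) (by simpa using Nat.succ_le_succ hi)
    simpa [List.take_succ_cons] using this

/-! ### The key coefficient computation -/

lemma magnus_key : ∀ (B : List (α × ℤ)), (B.map Prod.fst).Chain' (· ≠ ·) →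
    ((V B : (Mag α)ˣ) : Mag α) (B.map Prod.fst) = (B.map Prod.snd).prod := by
  intro B
  induction B with
  | nil => intro _; rfl
  | cons p B ih =>
    intro hc
    rw [V_cons, Units.val_mul, List.map_cons]
    show conv (p.1 :: B.map Prod.fst) _ _ = _
    set A : Mag α := ((U p.1 ^ p.2 : (Mag α)ˣ) : Mag α) with hA
    set R : Mag α := ((V B : (Mag α)ˣ) : Mag α) with hR
    show A [] * R (p.1 :: B.map Prod.fst) + conv (B.map Prod.fst) (fun u => A (p.1 :: u)) R = _
    have h1 : R (p.1 :: B.map Prod.fst) = 0 := by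
      by_contra h
      exact no_fit B _ (fits_of_ne_zero B _ h) (by rw [List.map_cons] at hc; exact hc)
        (by simp)
    have h2 : conv (B.map Prod.fst) (fun u => A (p.1 :: u)) R
        = A [p.1] * R (B.map Prod.fst) := by
      apply conv_eq_head_mul
      intro i hi hil
      by_contra hne
      obtain ⟨k, hk⟩ := Uzpow_supp p.1 p.2 _ hne
      -- the word p.1 :: take i (map fst B) is a replicate of p.1 of length ≥ 2
      cases hB : B.map Prod.fst with
      | nil => rw [hB] at hil; simp at hil; omega
      | cons b t =>
        rw [hB] at hk
        have htake : (b :: t).take i = b :: t.take (i - 1) := by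
          cases i with
          | zero => omega
          | succ i => simp
        rw [htake] at hk
        have hb : b ∈ List.replicate k p.1 := by
          rw [← hk]; simp
        have hbp : b = p.1 := List.eq_of_mem_replicate hb
        rw [List.map_cons, hB] at hc
        exact (List.isChain_cons_cons.mp hc).1 (hbp.symm)
    rw [h1, mul_zero, zero_add, h2, hA]
    rw [val_single_eq, ih (by rw [List.map_cons] at hc; exact hc.tail)]
    simp

/-! ### Reduced words and block decomposition -/

/-- no-cancellation relation between adjacent letters of a reduced word -/
def Rd (p q : α × Bool) : Prop := ¬(p.1 = q.1 ∧ q.2 = !p.2)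

lemma exists_decomp {L : List (α × Bool)} (h : ¬ L.Chain' Rd) :
    ∃ L₂ x b L₃, L = L₂ ++ (x, b) :: (x, !b) :: L₃ := by
  induction L with
  | nil => exact absurd List.isChain_nil h
  | cons p t ih =>
    cases t with
    | nil => exact absurd (List.isChain_singleton p) h
    | cons q t' =>
      rw [show List.Chain' Rd (p :: q :: t') ↔ _ from List.isChain_cons_cons] at h
      by_cases hpq : Rd p q
      · have h2 : ¬ (q :: t').Chain' Rd := fun hc => h ⟨hpq, hc⟩
        obtain ⟨L₂, x, b, L₃, he⟩ := ih h2
        exact ⟨p :: L₂, x, b, L₃, by rw [List.cons_append, ← he]⟩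
      · rw [Rd, not_not] at hpq
        refine ⟨[], p.1, p.2, t', ?_⟩
        have hq : q = (p.1, !p.2) := Prod.ext hpq.1.symm hpq.2
        simp [← hq]

lemma chain'_toWord [DecidableEq α] (x : FreeGroup α) : (x.toWord).Chain' Rd := by
  by_contra h
  obtain ⟨L₂, y, b, L₃, he⟩ := exists_decomp h
  exact FreeGroup.reduce.not (p := False) (L₁ := x.toWord) (L₂ := L₂) (L₃ := L₃)
    (x := y) (b := b) (by rw [FreeGroup.reduce_toWord]; exact he)

/-- sign of a letter -/
def sgn (b : Bool) : ℤ := cond b 1 (-1)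

@[simp] lemma sgn_mul_self (b : Bool) : sgn b * sgn b = 1 := by cases b <;> decide

lemma sgn_ne_zero (b : Bool) : sgn b ≠ 0 := by cases b <;> decide

open Classical in
/-- block decomposition of a word: consecutive equal letters are merged. -/
noncomputable def blocks : List (α × Bool) → List (α × ℤ)
  | [] => []
  | [p] => [(p.1, sgn p.2)]
  | p :: q :: t =>
    if p = q then
      match blocks (q :: t) with
      | [] => [(p.1, sgn p.2)]
      | r :: rs => (r.1, r.2 + sgn p.2) :: rs
    else (p.1, sgn p.2) :: blocks (q :: t)

lemma blocks_head : ∀ (p : α × Bool) (t : List (α × Bool)),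
    ∃ e r, blocks (p :: t) = (p.1, e) :: r := by
  intro p t
  induction t generalizing p with
  | nil => exact ⟨sgn p.2, [], rfl⟩
  | cons q t' ih =>
    by_cases hpq : p = q
    · obtain ⟨e, r, he⟩ := ih q
      refine ⟨e + sgn p.2, r, ?_⟩
      rw [blocks, if_pos hpq, he]
      rw [hpq]
    · exact ⟨sgn p.2, blocks (q :: t'), by rw [blocks, if_neg hpq]⟩

/-- the element of the free group determined by a block list -/
def prodOf (B : List (α × ℤ)) : FreeGroup α :=
  (B.map fun z => FreeGroup.of z.1 ^ z.2).prod

@[simp] lemma prodOf_nil : prodOf ([] : List (α × ℤ)) = 1 := rfl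

lemma prodOf_cons (z : α × ℤ) (B : List (α × ℤ)) :
    prodOf (z :: B) = FreeGroup.of z.1 ^ z.2 * prodOf B := by
  simp [prodOf]

lemma mk_single (p : α × Bool) : FreeGroup.mk [p] = FreeGroup.of p.1 ^ sgn p.2 := by
  obtain ⟨a, b⟩ := p
  cases b with
  | true =>
    show FreeGroup.mk [(a, true)] = FreeGroup.of a ^ (1 : ℤ)
    rw [zpow_one]
    rfl
  | false =>
    show FreeGroup.mk [(a, false)] = FreeGroup.of a ^ (-1 : ℤ)
    rw [zpow_neg, zpow_one]
    have : FreeGroup.of a = FreeGroup.mk [(a, true)] := rfl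
    rw [this, FreeGroup.inv_mk]
    congr 1

lemma blocks_prod : ∀ L : List (α × Bool), prodOf (blocks L) = FreeGroup.mk L := by
  intro L
  induction L with
  | nil => rfl
  | cons p t ih =>
    cases t with
    | nil =>
      show prodOf [(p.1, sgn p.2)] = _
      rw [prodOf_cons, prodOf_nil, mul_one, mk_single]
    | cons q t' =>
      have hsplit : FreeGroup.mk (p :: q :: t') = FreeGroup.mk [p] * FreeGroup.mk (q :: t') := by
        rw [FreeGroup.mul_mk]
        rfl
      by_cases hpq : p = q
      · obtain ⟨e, r, he⟩ := blocks_head q t'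
        have hb : blocks (p :: q :: t') = (q.1, e + sgn p.2) :: r := by
          rw [blocks, if_pos hpq, he]
        rw [hb, prodOf_cons, hsplit, ← ih, he, prodOf_cons]
        rw [mk_single]
        rw [show p.1 = q.1 from by rw [hpq], show p.2 = q.2 from by rw [hpq]]
        have hcomm : FreeGroup.of q.1 ^ e * FreeGroup.of q.1 ^ sgn q.2
            = FreeGroup.of q.1 ^ sgn q.2 * FreeGroup.of q.1 ^ e :=
          (((Commute.refl (FreeGroup.of q.1)).zpow_zpow e (sgn q.2))).eq
        rw [zpow_add, hcomm, mul_assoc]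
      · have hb : blocks (p :: q :: t') = (p.1, sgn p.2) :: blocks (q :: t') := by
          rw [blocks, if_neg hpq]
        rw [hb, prodOf_cons, hsplit, ← ih, mk_single]

lemma blocks_good : ∀ L : List (α × Bool), L.Chain' Rd →
    (((blocks L).map Prod.fst).Chain' (· ≠ ·) ∧ (∀ z ∈ blocks L, z.2 ≠ 0)) ∧
    (∀ p t, L = p :: t → ∃ e r, blocks L = (p.1, e) :: r ∧ 1 ≤ sgn p.2 * e) := by
  intro L
  induction L with
  | nil =>
    intro _
    refine ⟨⟨List.isChain_nil, by simp [blocks]⟩, ?_⟩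
    intro p t h
    exact absurd h (by simp)
  | cons p t ih =>
    intro hc
    cases t with
    | nil =>
      refine ⟨⟨?_, ?_⟩, ?_⟩
      · show List.Chain' _ [p.1]; exact List.isChain_singleton _
      · intro z hz
        rw [show blocks [p] = [(p.1, sgn p.2)] from rfl, List.mem_singleton] at hz
        rw [hz]
        exact sgn_ne_zero p.2
      · intro p' t' h
        rw [List.cons_eq_cons] at h
        obtain ⟨h1, h2⟩ := h
        subst h1
        subst h2
        exact ⟨sgn p.2, [], rfl, by simp⟩
    | cons q t' =>
      rw [show List.Chain' Rd (p :: q :: t') ↔ _ from List.isChain_cons_cons] at hc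
      obtain ⟨hRd, hc'⟩ := hc
      obtain ⟨⟨hchain, hnz⟩, hhead⟩ := ih hc'
      by_cases hpq : p = q
      · obtain ⟨e, r, he, hsign⟩ := hhead q t' rfl
        have hb : blocks (p :: q :: t') = (q.1, e + sgn p.2) :: r := by
          rw [blocks, if_pos hpq, he]
        have hsgn_eq : sgn p.2 = sgn q.2 := by rw [hpq]
        have hnewsign : 1 ≤ sgn p.2 * (e + sgn p.2) := by
          rw [mul_add, sgn_mul_self, hsgn_eq]
          omega
        refine ⟨⟨?_, ?_⟩, ?_⟩
        · rw [hb, List.map_cons]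
          rw [he, List.map_cons] at hchain
          exact hchain
        · intro z hz
          rw [hb, List.mem_cons] at hz
          rcases hz with rfl | hz
          · intro h0
            have h0' : e + sgn p.2 = 0 := h0
            rw [h0', mul_zero] at hnewsign
            omega
          · exact hnz z (by rw [he, List.mem_cons]; right; exact hz)
        · intro p' t'' h
          rw [List.cons_eq_cons] at h
          obtain ⟨he1, -⟩ := h
          refine ⟨e + sgn p.2, r, by rw [hb, ← he1, show p.1 = q.1 from by rw [hpq]], ?_⟩
          rw [← he1]
          exact hnewsign
      · have hne : p.1 ≠ q.1 := by
          intro h1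
          apply hpq
          have h2 : q.2 = p.2 := by
            rcases Bool.eq_or_eq_not q.2 p.2 with h | h
            · exact h
            · exact absurd ⟨h1, h⟩ hRd
          exact Prod.ext h1 (h2.symm)
        obtain ⟨e, r, he, -⟩ := hhead q t' rfl
        have hb : blocks (p :: q :: t') = (p.1, sgn p.2) :: blocks (q :: t') := by
          rw [blocks, if_neg hpq]
        refine ⟨⟨?_, ?_⟩, ?_⟩
        · rw [hb, List.map_cons, he, List.map_cons, show List.Chain' (· ≠ ·) (p.1 :: q.1 :: List.map Prod.fst r) ↔ _ from List.isChain_cons_cons]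
          rw [he, List.map_cons] at hchain
          exact ⟨hne, hchain⟩
        · intro z hz
          rw [hb, List.mem_cons] at hz
          rcases hz with rfl | hz
          · exact sgn_ne_zero p.2
          · exact hnz z hz
        · intro p' t'' h
          rw [List.cons_eq_cons] at h
          obtain ⟨he1, -⟩ := h
          exact ⟨sgn p.2, blocks (q :: t'), by rw [hb, ← he1], by rw [← he1, sgn_mul_self]⟩

lemma magnus_prodOf (B : List (α × ℤ)) : magnus (prodOf B) = V B := by
  rw [prodOf, map_list_prod, V, List.map_map]
  congr 1
  apply List.map_congr_left
  intro z _
  show magnus (FreeGroup.of z.1 ^ z.2) = _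
  rw [map_zpow, magnus_of]

/-- Magnus injectivity consequence: only the identity maps to 1. -/
lemma eq_one_of_magnus_eq_one [DecidableEq α] {x : FreeGroup α} (h : magnus x = 1) : x = 1 := by
  by_contra hx1
  have hL : x.toWord ≠ [] := fun h0 => hx1 (FreeGroup.toWord_eq_nil_iff.mp h0)
  obtain ⟨p, t, hpt⟩ : ∃ p t, x.toWord = p :: t := by
    cases h0 : x.toWord with
    | nil => exact absurd h0 hL
    | cons p t => exact ⟨p, t, rfl⟩
  have hchain := chain'_toWord x
  rw [hpt] at hchain
  obtain ⟨⟨hchain', hnz⟩, hhead⟩ := blocks_good (p :: t) hchain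
  obtain ⟨e, r, hb, -⟩ := hhead p t rfl
  have hx_eq : prodOf (blocks (p :: t)) = x := by
    rw [blocks_prod, ← hpt, FreeGroup.mk_toWord]
  have hφ : magnus x = V (blocks (p :: t)) := by rw [← hx_eq, magnus_prodOf]
  have hkey := magnus_key (blocks (p :: t)) hchain'
  have hprodne : ((blocks (p :: t)).map Prod.snd).prod ≠ 0 := by
    apply List.prod_ne_zero
    intro h0
    rw [List.mem_map] at h0
    obtain ⟨z, hz, hz0⟩ := h0
    exact hnz z hz hz0
  rw [← hφ, h] at hkey
  rw [hb, List.map_cons] at hkey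
  have : ((1 : (Mag α)ˣ) : Mag α) (p.1 :: r.map Prod.fst) = 0 := by
    rw [Units.val_one]
    rfl
  rw [this] at hkey
  rw [hb, List.map_cons] at hprodne
  exact hprodne hkey.symm

end MagnusAux

/-- **Free groups are residually nilpotent**: the intersection of all terms of the
lower central series of a free group is trivial. -/
theorem freeGroup_residually_nilpotent (α : Type*) :
    (⨅ q : ℕ, (⊤ : Subgroup (FreeGroup α)).lowerCentralSeries q) = ⊥ := by
  rw [eq_bot_iff]
  intro x hx
  rw [Subgroup.mem_iInf] at hx
  have hH : ∀ q, MagnusAux.magnus x ∈ MagnusAux.H (q + 1) :=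
    fun q => MagnusAux.lcs_le_comap q (hx q)
  have hval : ∀ w : List α,
      ((MagnusAux.magnus x : (MagnusAux.Mag α)ˣ) : MagnusAux.Mag α) w
        = ((1 : (MagnusAux.Mag α)ˣ) : MagnusAux.Mag α) w := by
    intro w
    have h1 := (hH w.length) w (Nat.lt_succ_self _)
    have h2 : ((MagnusAux.magnus x : _) : MagnusAux.Mag α) w - (1 : MagnusAux.Mag α) w = 0 := h1
    rw [Units.val_one]
    omega
  have hunit : MagnusAux.magnus x = 1 := Units.ext (funext hval)
  rw [Subgroup.mem_bot]
  letI := Classical.decEq α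
  exact MagnusAux.eq_one_of_magnus_eq_one hunit
end

section
/- For any group G, the quotient G/G_q^p is nilpotent of class less than q when p = 0, and for p prime it is a nilpotent group in which the image of G_j^p / G_q^p coincides with (G/G_q^p)_j^p for all j ≤ q; in particular (G/G_q^p)_q^p is trivial. -/
open scoped commutatorElement

/-- The mod-`p` lower central series: `modpLCS G p m` is `G_{m+1}^p`, so
`modpLCS G p 0 = G_1^p = G` and `G_{q+1}^p` is the normal closure of
`{ [x,y] * z^p : x ∈ G, y, z ∈ G_q^p }`. -/
def modpLCS (G : Type*) [Group G] (p : ℕ) : ℕ → Subgroup G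
  | 0 => ⊤
  | q + 1 => Subgroup.normalClosure
      {g | ∃ x y z : G, y ∈ modpLCS G p q ∧ z ∈ modpLCS G p q ∧ g = ⁅x, y⁆ * z ^ p}

instance modpLCS_normal (G : Type*) [Group G] (p q : ℕ) : (modpLCS G p q).Normal := by
  cases q with
  | zero => rw [modpLCS]; infer_instance
  | succ q => rw [modpLCS]; infer_instance

/-- The image of `modpLCS` under a surjective homomorphism is `modpLCS` of the target. -/
lemma map_modpLCS {G H : Type*} [Group G] [Group H] (f : G →* H)
    (hf : Function.Surjective f) (p : ℕ) : ∀ j, (modpLCS G p j).map f = modpLCS H p j := by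
  intro j
  induction j with
  | zero => rw [modpLCS, modpLCS]; exact Subgroup.map_top_of_surjective f hf
  | succ j ih =>
    rw [modpLCS, modpLCS, Subgroup.map_normalClosure _ f hf]
    congr 1
    ext g
    constructor
    · rintro ⟨_, ⟨x, y, z, hy, hz, rfl⟩, rfl⟩
      exact ⟨f x, f y, f z, ih ▸ ⟨y, hy, rfl⟩, ih ▸ ⟨z, hz, rfl⟩, by
        simp [map_commutatorElement]⟩
    · rintro ⟨x, y, z, hy, hz, rfl⟩
      rw [← ih] at hy hz
      obtain ⟨y₀, hy₀, rfl⟩ := hy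
      obtain ⟨z₀, hz₀, rfl⟩ := hz
      obtain ⟨x₀, rfl⟩ := hf x
      exact ⟨⁅x₀, y₀⁆ * z₀ ^ p, ⟨x₀, y₀, z₀, hy₀, hz₀, rfl⟩, by
        simp [map_commutatorElement]⟩

/-- The lower central series is contained in the mod-`p` lower central series. -/
lemma lowerCentralSeries_le_modpLCS (G : Type*) [Group G] (p : ℕ) :
    ∀ j, Subgroup.lowerCentralSeries (⊤ : Subgroup G) j ≤ modpLCS G p j := by
  intro j
  induction j with
  | zero => exact le_of_eq rfl
  | succ j ih =>
    rw [Subgroup.lowerCentralSeries_succ]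
    refine Subgroup.commutator_le.mpr fun g₁ h₁ g₂ _ => ?_
    have hmem : ⁅g₂, g₁⁆ ∈ modpLCS G p (j + 1) := by
      rw [modpLCS]
      exact Subgroup.subset_normalClosure ⟨g₂, g₁, 1, ih h₁, (modpLCS G p j).one_mem, by simp⟩
    have : ⁅g₁, g₂⁆ = ⁅g₂, g₁⁆⁻¹ := by rw [commutatorElement_inv]
    rw [this]
    exact (modpLCS G p (j + 1)).inv_mem hmem

/-- For `p = 0` the mod-`p` lower central series is the lower central series. -/
lemma modpLCS_zero (G : Type*) [Group G] : ∀ j, modpLCS G 0 j = Subgroup.lowerCentralSeries (⊤ : Subgroup G) j := by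
  intro j
  induction j with
  | zero => rfl
  | succ j ih =>
    rw [modpLCS, ih]
    show _ = ⁅Subgroup.lowerCentralSeries (⊤ : Subgroup G) j, (⊤ : Subgroup G)⁆
    rw [Subgroup.commutator_comm, Subgroup.commutator_def']
    congr 1
    ext g
    constructor
    · rintro ⟨x, y, z, hy, _, rfl⟩
      exact ⟨x, trivial, y, hy, by simp⟩
    · rintro ⟨x, -, y, hy, rfl⟩
      exact ⟨x, y, 1, hy, (Subgroup.lowerCentralSeries (⊤ : Subgroup G) j).one_mem, by simp⟩

/-- For `Q = G/G_q^p` (with `q = m + 1`, so `G_q^p = modpLCS G p m`):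
if `p = 0` then `Q` is nilpotent of class less than `q`; if `p` is prime then `Q` is
nilpotent and the image of `G_j^p` in `Q` equals `Q_j^p` for all `j ≤ q`; in particular
`Q_q^p` is trivial. -/
theorem quotient_modpLCS_nilpotent (G : Type*) [Group G] (p m : ℕ) :
    (p = 0 → ∃ h : Group.IsNilpotent (G ⧸ modpLCS G p m),
      Group.nilpotencyClass (G ⧸ modpLCS G p m) < m + 1) ∧
    (p.Prime → Group.IsNilpotent (G ⧸ modpLCS G p m) ∧
      (∀ j ≤ m, modpLCS (G ⧸ modpLCS G p m) p j =
        (modpLCS G p j).map (QuotientGroup.mk' (modpLCS G p m))) ∧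
      modpLCS (G ⧸ modpLCS G p m) p m = ⊥) := by
  have hbot : modpLCS (G ⧸ modpLCS G p m) p m = ⊥ := by
    rw [← map_modpLCS (QuotientGroup.mk' (modpLCS G p m)) (QuotientGroup.mk'_surjective _) p m,
      Subgroup.map_eq_bot_iff, QuotientGroup.ker_mk']
  have hlcs : Subgroup.lowerCentralSeries (⊤ : Subgroup (G ⧸ modpLCS G p m)) m = ⊥ :=
    le_bot_iff.mp (hbot ▸ lowerCentralSeries_le_modpLCS _ p m)
  have hnil : Group.IsNilpotent (G ⧸ modpLCS G p m) :=
    Subgroup.nilpotent_iff_lowerCentralSeries.mpr ⟨m, hlcs⟩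
  constructor
  · intro _
    exact ⟨hnil, Nat.lt_succ_of_le (lowerCentralSeries_eq_bot_iff_nilpotencyClass_le.mp hlcs)⟩
  · intro _
    exact ⟨hnil, fun j _ =>
      (map_modpLCS (QuotientGroup.mk' (modpLCS G p m)) (QuotientGroup.mk'_surjective _) p j).symm,
      hbot⟩
end
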